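/- Let a, b, c ≥ 0 with c² ≥ a² + b², a,b,c ≤ 1, and let f_B(x) = 2-2√((1+√(1-x²))/2). Assume k ≥ 1, ω ≥ 1, η ≥ 1, 0 ≤ α ≤ η/2, and f_B(b)^η ≥ k^ω f_B(a)^η with f_B(a) > 0. Then f_B(c)^α ≥ (1/2)^(α/η) f_B(a)^α + ((1+k^ω)^(α/η) - (1/2)^(α/η))/k^(ωα/η) · f_B(b)^α. -/

import Mathlib

lemma key_XYZ {σ τ ρ u X Y Z : ℝ}
    (hσ0 : 0 ≤ σ) (hσ1 : σ ≤ 1) (hτ0 : 0 ≤ τ) (hτ1 : τ ≤ 1) (hρ0 : 0 ≤ ρ)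
    (hρσ : ρ ≤ σ) (hρτ : ρ ≤ τ)
    (hσ2 : σ^2 = 1 - u) (hτρ : τ^2 - ρ^2 = u)
    (hX0 : 0 ≤ X) (hY0 : 0 ≤ Y) (hZ0 : 0 ≤ Z) (hY2 : Y ≤ 2)
    (hXs : X^2 = 2+2*σ) (hYs : Y^2 = 2+2*τ) (hZs : Z^2 = 2+2*ρ) :
    2 - X ≤ Y - Z := by
  have hZX : Z ≤ X := by nlinarith
  have hZY : Z ≤ Y := by nlinarith
  have e1 : (Y-Z)*((Y+Z)*(τ+ρ)) = 2*u := by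
    linear_combination (τ+ρ)*hYs - (τ+ρ)*hZs + 2*hτρ
  have e2 : (2-X)*((2+X)*(1+σ)) = 2*u := by
    linear_combination (-(1+σ))*hXs + (-2)*hσ2
  have hfac : (Y+Z)*(τ+ρ) ≤ (2+X)*(1+σ) :=
    mul_le_mul (by linarith) (by linarith) (by linarith) (by linarith)
  rcases le_or_gt (2 - X) 0 with hX2 | hX2
  · linarith
  · have hM' : 0 < (2+X)*(1+σ) := mul_pos (by linarith) (by linarith)
    have hu' : 0 < 2*u := by
      rw [← e2]; exact mul_pos hX2 hM'
    have hYZ : 0 < Y - Z := by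
      rcases lt_or_ge 0 (Y - Z) with h | h
      · exact h
      · exfalso
        have hM : 0 ≤ (Y+Z)*(τ+ρ) := mul_nonneg (by linarith) (by linarith)
        nlinarith
    have h1 : 2*u ≤ (Y-Z)*((2+X)*(1+σ)) := by
      calc 2*u = (Y-Z)*((Y+Z)*(τ+ρ)) := e1.symm
        _ ≤ (Y-Z)*((2+X)*(1+σ)) := mul_le_mul_of_nonneg_left hfac hYZ.le
    have h2 : (2-X)*((2+X)*(1+σ)) ≤ (Y-Z)*((2+X)*(1+σ)) := by rw [e2]; exact h1
    exact le_of_mul_le_mul_right h2 hM'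

lemma two_sqrt_half (w : ℝ) : 2 * Real.sqrt ((1+w)/2) = Real.sqrt (2+2*w) := by
  rw [show 2+2*w = 4*((1+w)/2) by ring, Real.sqrt_mul (by norm_num : (0:ℝ) ≤ 4),
    show Real.sqrt 4 = 2 by rw [show (4:ℝ) = 2^2 by norm_num, Real.sqrt_sq (by norm_num : (0:ℝ) ≤ 2)]]

lemma rpow_superadd {x y p : ℝ} (hx : 0 ≤ x) (hy : 0 ≤ y) (hp : 1 ≤ p) :
    x ^ p + y ^ p ≤ (x + y) ^ p := by
  have h := NNReal.add_rpow_le_rpow_add x.toNNReal y.toNNReal hp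
  rw [← NNReal.coe_le_coe] at h
  push_cast [NNReal.coe_rpow] at h
  rwa [Real.coe_toNNReal x hx, Real.coe_toNNReal y hy] at h

lemma fB_superadd {a b c : ℝ} (ha0 : 0 ≤ a) (hb0 : 0 ≤ b) (hc0 : 0 ≤ c)
    (ha1 : a ≤ 1) (hb1 : b ≤ 1) (hc1 : c ≤ 1) (hckw : a^2 + b^2 ≤ c^2) :
    (2 - 2*Real.sqrt ((1+Real.sqrt (1-a^2))/2)) + (2 - 2*Real.sqrt ((1+Real.sqrt (1-b^2))/2))
      ≤ 2 - 2*Real.sqrt ((1+Real.sqrt (1-c^2))/2) := by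
  have hc2 : c^2 ≤ 1 := by nlinarith
  have ha2 : (0:ℝ) ≤ 1 - a^2 := by nlinarith
  have hb2 : (0:ℝ) ≤ 1 - b^2 := by nlinarith
  have huv : a^2 + b^2 ≤ 1 := le_trans hckw hc2
  set σ := Real.sqrt (1-a^2) with hσ
  set τ := Real.sqrt (1-b^2) with hτ
  set ρ := Real.sqrt (1-a^2-b^2) with hρ
  have hσ0 : 0 ≤ σ := Real.sqrt_nonneg _
  have hτ0 : 0 ≤ τ := Real.sqrt_nonneg _
  have hρ0 : 0 ≤ ρ := Real.sqrt_nonneg _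
  have hσ1 : σ ≤ 1 := Real.sqrt_le_one.mpr (by nlinarith [sq_nonneg a, sq_nonneg b])
  have hτ1 : τ ≤ 1 := Real.sqrt_le_one.mpr (by nlinarith [sq_nonneg a, sq_nonneg b])
  have hσ2 : σ^2 = 1 - a^2 := Real.sq_sqrt ha2
  have hτ2 : τ^2 = 1 - b^2 := Real.sq_sqrt hb2
  have hρ2 : ρ^2 = 1 - a^2 - b^2 := Real.sq_sqrt (by linarith)
  have hρσ : ρ ≤ σ := Real.sqrt_le_sqrt (by nlinarith [sq_nonneg b])
  have hρτ : ρ ≤ τ := Real.sqrt_le_sqrt (by nlinarith [sq_nonneg a])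
  have hτρ : τ^2 - ρ^2 = a^2 := by rw [hτ2, hρ2]; ring
  rw [two_sqrt_half, two_sqrt_half, two_sqrt_half]
  set X := Real.sqrt (2+2*σ) with hX
  set Y := Real.sqrt (2+2*τ) with hY
  set Z := Real.sqrt (2+2*ρ) with hZ
  have hX0 : 0 ≤ X := Real.sqrt_nonneg _
  have hY0 : 0 ≤ Y := Real.sqrt_nonneg _
  have hZ0 : 0 ≤ Z := Real.sqrt_nonneg _
  have h4 : Real.sqrt 4 = 2 := by
    rw [show (4:ℝ) = 2^2 by norm_num]; exact Real.sqrt_sq (by norm_num)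
  have hY2 : Y ≤ 2 := le_trans (Real.sqrt_le_sqrt (by linarith)) (le_of_eq h4)
  have hXs : X^2 = 2+2*σ := Real.sq_sqrt (by linarith)
  have hYs : Y^2 = 2+2*τ := Real.sq_sqrt (by linarith)
  have hZs : Z^2 = 2+2*ρ := Real.sq_sqrt (by linarith)
  have hkey : 2 - X ≤ Y - Z :=
    key_XYZ hσ0 hσ1 hτ0 hτ1 hρ0 hρσ hρτ hσ2 hτρ hX0 hY0 hZ0 hY2 hXs hYs hZs
  have hcρ : Real.sqrt (1-c^2) ≤ ρ := Real.sqrt_le_sqrt (by linarith)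
  have hWZ : Real.sqrt (2+2*Real.sqrt (1-c^2)) ≤ Z := Real.sqrt_le_sqrt (by linarith)
  linarith


lemma g_mono {x : ℝ} (hx0 : 0 ≤ x) (hx : x ≤ 1/2) {K t : ℝ} (hK : 1 ≤ K) (ht : K ≤ t) :
    ((1+K)^x - (1/2:ℝ)^x) / K^x ≤ ((1+t)^x - (1/2:ℝ)^x) / t^x := by
  set c0 : ℝ := (1/2:ℝ)^x with hc0
  set f : ℝ → ℝ := fun s => ((1+s)^x - c0) * s^(-x) with hf
  have hder : ∀ s : ℝ, 1 < s → HasDerivAt f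
      ((x*(1+s)^(x-1)) * s^(-x) + ((1+s)^x - c0) * (-x * s^(-x-1))) s := by
    intro s hs
    have hs0 : (0:ℝ) < s := lt_trans one_pos hs
    have h1s : (0:ℝ) < 1 + s := by linarith
    have h1 : HasDerivAt (fun s : ℝ => (1+s)^x) (x*(1+s)^(x-1)) s := by
      have h := (Real.hasDerivAt_rpow_const (x := 1+s) (p := x)
        (Or.inl h1s.ne')).comp s ((hasDerivAt_id s).const_add 1)
      simp at h; exact h
    have h2 : HasDerivAt (fun s : ℝ => s^(-x)) (-x * s^(-x-1)) s :=
      Real.hasDerivAt_rpow_const (Or.inl hs0.ne')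
    exact (h1.sub_const c0).mul h2
  have hderiv_nonneg : ∀ s ∈ interior (Set.Ici (1:ℝ)), 0 ≤ deriv f s := by
    rw [interior_Ici]
    intro s hs
    rw [Set.mem_Ioi] at hs
    have hs0 : (0:ℝ) < s := lt_trans one_pos hs
    have h1s : (0:ℝ) < 1 + s := by linarith
    rw [(hder s hs).deriv]
    have hsplit : (1+s)^x = (1+s)^(x-1) * (1+s) := by
      rw [← Real.rpow_add_one h1s.ne' (x-1)]; norm_num
    have hsplit2 : s^(-x) = s^(-x-1) * s := by
      rw [← Real.rpow_add_one hs0.ne' (-x-1)]; norm_num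
    have e : (x*(1+s)^(x-1)) * s^(-x) + ((1+s)^x - c0) * (-x * s^(-x-1))
        = x * s^(-x-1) * (c0 - (1+s)^(x-1)) := by
      rw [hsplit, hsplit2]; ring
    rw [e]
    have hb : (1+s)^(x-1) ≤ c0 := by
      have hA : (1+s)^(x-1) ≤ (2:ℝ)^(x-1) := by
        have h1 : (2:ℝ)^(1-x) ≤ (1+s)^(1-x) :=
          Real.rpow_le_rpow (by norm_num) (by linarith) (by linarith)
        have h2 : (0:ℝ) < 2^(1-x) := Real.rpow_pos_of_pos (by norm_num) _
        calc (1+s)^(x-1) = ((1+s)^(1-x))⁻¹ := by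
              rw [show x - 1 = -(1-x) by ring, Real.rpow_neg (by linarith : (0:ℝ) ≤ 1+s)]
          _ ≤ ((2:ℝ)^(1-x))⁻¹ := inv_anti₀ h2 h1
          _ = (2:ℝ)^(x-1) := by
              rw [show x - 1 = -(1-x) by ring, Real.rpow_neg (by norm_num : (0:ℝ) ≤ 2)]
      have hB : (2:ℝ)^(x-1) ≤ (2:ℝ)^(-x) :=
        Real.rpow_le_rpow_of_exponent_le one_le_two (by linarith)
      have hC : c0 = (2:ℝ)^(-x) := by
        rw [hc0, Real.rpow_neg (by norm_num : (0:ℝ) ≤ 2),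
          ← Real.inv_rpow (by norm_num : (0:ℝ) ≤ 2)]
        norm_num
      rw [hC]; exact le_trans hA hB
    have : (0:ℝ) ≤ x * s^(-x-1) := mul_nonneg hx0 (Real.rpow_nonneg hs0.le _)
    exact mul_nonneg this (by linarith)
  have hcont : ContinuousOn f (Set.Ici 1) := by
    apply ContinuousOn.mul
    · apply ContinuousOn.sub _ continuousOn_const
      exact (continuous_const.add continuous_id).continuousOn.rpow_const
        (fun s hs => Or.inl (by rw [Set.mem_Ici] at hs; show (1:ℝ) + s ≠ 0; positivity))
    · exact continuous_id.continuousOn.rpow_const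
        (fun s hs => Or.inl (by rw [Set.mem_Ici] at hs; positivity))
  have hdiff : DifferentiableOn ℝ f (interior (Set.Ici 1)) := by
    rw [interior_Ici]
    intro s hs
    exact ((hder s (Set.mem_Ioi.mp hs)).differentiableAt).differentiableWithinAt
  have hmono := monotoneOn_of_deriv_nonneg (convex_Ici 1) hcont hdiff hderiv_nonneg
  have hft := hmono (Set.mem_Ici.mpr hK) (Set.mem_Ici.mpr (le_trans hK ht)) ht
  have hKpos : (0:ℝ) < K := lt_of_lt_of_le one_pos hK
  have htpos : (0:ℝ) < t := lt_of_lt_of_le hKpos ht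
  simp only [hf] at hft
  rwa [Real.rpow_neg hKpos.le, Real.rpow_neg htpos.le, ← div_eq_mul_inv, ← div_eq_mul_inv] at hft

theorem stmt_9 (a b c k ω η α : ℝ)
    (ha0 : 0 ≤ a) (hb0 : 0 ≤ b) (hc0 : 0 ≤ c)
    (ha1 : a ≤ 1) (hb1 : b ≤ 1) (hc1 : c ≤ 1)
    (hckw : c ^ 2 ≥ a ^ 2 + b ^ 2)
    (hk : 1 ≤ k) (hω : 1 ≤ ω) (hη : 1 ≤ η) (hα0 : 0 ≤ α) (hα : α ≤ η / 2)
    (fB : ℝ → ℝ)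
    (hfB : ∀ x : ℝ, fB x = 2 - 2 * Real.sqrt ((1 + Real.sqrt (1 - x ^ 2)) / 2))
    (hfa : 0 < fB a) (hcond : fB b ^ η ≥ k ^ ω * fB a ^ η) :
    fB c ^ α ≥ (1 / 2 : ℝ) ^ (α / η) * fB a ^ α +
      ((1 + k ^ ω) ^ (α / η) - (1 / 2 : ℝ) ^ (α / η)) / k ^ (ω * α / η) * fB b ^ α := by
  have hη0 : (0:ℝ) < η := lt_of_lt_of_le one_pos hη
  have hk0 : (0:ℝ) < k := lt_of_lt_of_le one_pos hk
  have hx0 : 0 ≤ α / η := div_nonneg hα0 hη0.le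
  have hx2 : α / η ≤ 1/2 := by
    rw [div_le_div_iff₀ hη0 (by norm_num : (0:ℝ) < 2)]; linarith
  have hkrw : k ^ (ω * α / η) = (k ^ ω) ^ (α / η) := by
    rw [mul_div_assoc]; exact Real.rpow_mul hk0.le ω (α/η)
  rw [hkrw, ge_iff_le]
  set x := α / η with hxdef
  have hmulηx : η * x = α := by
    rw [hxdef]; field_simp
  -- basic positivity of fB values
  have hfBnonneg : ∀ y : ℝ, 0 ≤ fB y := by
    intro y
    rw [hfB]
    have h1 : Real.sqrt (1 - y^2) ≤ 1 := Real.sqrt_le_one.mpr (by nlinarith [sq_nonneg y])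
    have h2 : Real.sqrt ((1 + Real.sqrt (1-y^2))/2) ≤ 1 := Real.sqrt_le_one.mpr (by linarith)
    linarith
  have hK1 : (1:ℝ) ≤ k ^ ω := by
    calc (1:ℝ) = 1 ^ ω := (Real.one_rpow ω).symm
      _ ≤ k ^ ω := Real.rpow_le_rpow zero_le_one hk (by linarith)
  have hKpos : (0:ℝ) < k ^ ω := lt_of_lt_of_le one_pos hK1
  have hApos : (0:ℝ) < fB a ^ η := Real.rpow_pos_of_pos hfa η
  have hfb0 : (0:ℝ) < fB b := by
    rcases lt_or_ge 0 (fB b) with h | h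
    · exact h
    · exfalso
      have hfb : fB b = 0 := le_antisymm h (hfBnonneg b)
      have hB : (0:ℝ) < fB b ^ η := lt_of_lt_of_le (mul_pos hKpos hApos) hcond
      rw [hfb, Real.zero_rpow hη0.ne'] at hB
      exact lt_irrefl 0 hB
  have hBpos : (0:ℝ) < fB b ^ η := Real.rpow_pos_of_pos hfb0 η
  have hsuper : fB a + fB b ≤ fB c := by
    rw [hfB a, hfB b, hfB c]
    exact fB_superadd ha0 hb0 hc0 ha1 hb1 hc1 hckw
  have hfc0 : (0:ℝ) ≤ fB c := le_trans (by linarith) hsuper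
  have hpow : fB a ^ η + fB b ^ η ≤ fB c ^ η :=
    le_trans (rpow_superadd hfa.le hfb0.le hη)
      (Real.rpow_le_rpow (by linarith) hsuper (by linarith))
  set A := fB a ^ η with hA
  set B := fB b ^ η with hB
  set K := k ^ ω with hKdef
  set t := B / A with htdef
  have ht : K ≤ t := (le_div_iff₀ hApos).mpr hcond
  have htpos : (0:ℝ) < t := lt_of_lt_of_le (lt_of_lt_of_le one_pos hK1) ht
  have hBt : B = A * t := by rw [htdef]; field_simp
  set c0 : ℝ := (1/2:ℝ)^x with hc0
  have gkey := g_mono hx0 hx2 hK1 ht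
  have hmain : c0 + ((1+K)^x - c0)/K^x * t^x ≤ (1+t)^x := by
    have h2 := mul_le_mul_of_nonneg_right gkey (Real.rpow_nonneg htpos.le x)
    rw [div_mul_cancel₀ _ (ne_of_gt (Real.rpow_pos_of_pos htpos x))] at h2
    linarith
  have hAx : A ^ x = fB a ^ α := by
    rw [hA, ← Real.rpow_mul hfa.le, hmulηx]
  have hBx : B ^ x = fB b ^ α := by
    rw [hB, ← Real.rpow_mul hfb0.le, hmulηx]
  have hCx : (fB c ^ η) ^ x = fB c ^ α := by
    rw [← Real.rpow_mul hfc0, hmulηx]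
  have hAxpos : (0:ℝ) < A ^ x := Real.rpow_pos_of_pos hApos x
  calc c0 * fB a ^ α + ((1+K)^x - c0)/K^x * fB b ^ α
      = A^x * (c0 + ((1+K)^x - c0)/K^x * t^x) := by
        rw [← hAx, ← hBx, hBt, Real.mul_rpow hApos.le htpos.le]; ring
    _ ≤ A^x * (1+t)^x := mul_le_mul_of_nonneg_left hmain hAxpos.le
    _ = (A * (1+t))^x := (Real.mul_rpow hApos.le (by linarith)).symm
    _ = (A + B)^x := by rw [hBt]; ring_nf
    _ ≤ (fB c ^ η)^x := Real.rpow_le_rpow (by linarith) hpow hx0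
    _ = fB c ^ α := hCx
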